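/- Let 1 < α < 2 and ρ > 0. Then the second derivative of the phase is ψ_R″(λ) = α·(λ² + ρ²)^{−(2−α/2)}·[(α−1)λ² + ρ²] (independent of R); it is strictly positive on ℝ, and there exist constants c, C > 0 depending only on α and ρ such that c·(1+|λ|)^{−(2−α)} ≤ ψ_R″(λ) ≤ C·(1+|λ|)^{−(2−α)} for all λ ∈ ℝ. Moreover ψ_R″ is an inhomogeneous symbol of order −(2−α): for every j ∈ ℕ there is a constant C_j ≥ 0, depending only on α, ρ and j, such that |(d/dλ)^j ψ_R″(λ)| ≤ C_j·(1+|λ|)^{−(2−α)−j} for all λ ∈ ℝ. -/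

import Mathlib

/-- The phase `ψ_R(λ) = (λ² + ρ²)^{α/2} − R·λ`. -/
noncomputable def psi (α ρ R lam : ℝ) : ℝ :=
  (lam ^ 2 + ρ ^ 2) ^ (α / 2) - R * lam

namespace Stmt1Aux

open Polynomial

lemma upos {ρ : ℝ} (hρ : 0 < ρ) (x : ℝ) : 0 < x ^ 2 + ρ ^ 2 :=
  add_pos_of_nonneg_of_pos (sq_nonneg x) (pow_pos hρ 2)

lemma hasDerivAt_u (ρ x : ℝ) : HasDerivAt (fun y : ℝ => y ^ 2 + ρ ^ 2) (2 * x) x := by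
  simpa using (hasDerivAt_pow 2 x).add_const (ρ ^ 2)

lemma deriv_psi {ρ : ℝ} (hρ : 0 < ρ) (α R : ℝ) :
    deriv (psi α ρ R) = fun x => α * x * (x ^ 2 + ρ ^ 2) ^ (α / 2 - 1) - R := by
  funext x
  have h1 : HasDerivAt (fun y : ℝ => (y ^ 2 + ρ ^ 2) ^ (α / 2))
      (2 * x * (α / 2) * (x ^ 2 + ρ ^ 2) ^ (α / 2 - 1)) x :=
    (hasDerivAt_u ρ x).rpow_const (Or.inl (upos hρ x).ne')
  have h2 : HasDerivAt (psi α ρ R)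
      (2 * x * (α / 2) * (x ^ 2 + ρ ^ 2) ^ (α / 2 - 1) - R) x := by
    have := h1.sub (((hasDerivAt_id x).const_mul R))
    rw [mul_one] at this
    exact this
  rw [h2.deriv]; ring

lemma second_deriv {α ρ : ℝ} (hρ : 0 < ρ) (R lam : ℝ) :
    iteratedDeriv 2 (psi α ρ R) lam
      = α * (lam ^ 2 + ρ ^ 2) ^ (-(2 - α / 2)) * ((α - 1) * lam ^ 2 + ρ ^ 2) := by
  have hu := upos hρ lam
  have h2 : iteratedDeriv 2 (psi α ρ R) = deriv (deriv (psi α ρ R)) := by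
    rw [show (2 : ℕ) = 1 + 1 from rfl, iteratedDeriv_succ, iteratedDeriv_one]
  rw [h2, deriv_psi hρ]
  have h1 : HasDerivAt (fun y : ℝ => (y ^ 2 + ρ ^ 2) ^ (α / 2 - 1))
      (2 * lam * (α / 2 - 1) * (lam ^ 2 + ρ ^ 2) ^ (α / 2 - 1 - 1)) lam :=
    (hasDerivAt_u ρ lam).rpow_const (Or.inl hu.ne')
  have hmul : HasDerivAt (fun y : ℝ => α * y) α lam := by
    simpa using (hasDerivAt_id lam).const_mul α
  have h3 := (hmul.mul h1).sub_const R
  rw [show deriv (fun x => α * x * (x ^ 2 + ρ ^ 2) ^ (α / 2 - 1) - R) lam = _ from h3.deriv]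
  rw [show α / 2 - 1 - 1 = -(2 - α / 2) by ring,
    show α / 2 - 1 = 1 + -(2 - α / 2) by ring, Real.rpow_add hu, Real.rpow_one]
  ring

lemma hasDerivAt_poly_rpow {ρ : ℝ} (hρ : 0 < ρ) (P : ℝ[X]) (t x : ℝ) :
    HasDerivAt (fun y => P.eval y * (y ^ 2 + ρ ^ 2) ^ (-t))
      ((derivative P * (X ^ 2 + C (ρ ^ 2)) - C (2 * t) * X * P).eval x
        * (x ^ 2 + ρ ^ 2) ^ (-(t + 1))) x := by
  have hu := upos hρ x
  have h1 : HasDerivAt (fun y : ℝ => (y ^ 2 + ρ ^ 2) ^ (-t))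
      (2 * x * (-t) * (x ^ 2 + ρ ^ 2) ^ (-t - 1)) x :=
    (hasDerivAt_u ρ x).rpow_const (Or.inl hu.ne')
  have h2 := (P.hasDerivAt x).mul h1
  refine h2.congr_deriv ?_
  have hsplit : (x ^ 2 + ρ ^ 2) ^ (-t) = (x ^ 2 + ρ ^ 2) * (x ^ 2 + ρ ^ 2) ^ (-(t + 1)) := by
    rw [show (-t) = 1 + -(t + 1) by ring, Real.rpow_add hu, Real.rpow_one]
  rw [show -t - 1 = -(t + 1) by ring, hsplit]
  simp only [eval_sub, eval_mul, eval_add, eval_pow, eval_C, eval_X, derivative_mul]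
  ring

lemma iter_poly {ρ : ℝ} (hρ : 0 < ρ) (P : ℝ[X]) (t : ℝ) (j : ℕ) :
    ∃ Q : ℝ[X], Q.natDegree ≤ P.natDegree + j ∧
      iteratedDeriv j (fun y => P.eval y * (y ^ 2 + ρ ^ 2) ^ (-t))
        = fun x => Q.eval x * (x ^ 2 + ρ ^ 2) ^ (-(t + (j : ℝ))) := by
  induction j with
  | zero => exact ⟨P, by simp, by simp⟩
  | succ j ih =>
    obtain ⟨Q, hdeg, hQ⟩ := ih
    refine ⟨derivative Q * (X ^ 2 + C (ρ ^ 2)) - C (2 * (t + (j : ℝ))) * X * Q, ?_, ?_⟩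
    · refine (natDegree_sub_le _ _).trans (max_le ?_ ?_)
      · rcases Nat.eq_zero_or_pos Q.natDegree with h0 | h1
        · rw [derivative_of_natDegree_zero h0, zero_mul]
          simp
        · refine natDegree_mul_le.trans ?_
          have h2 : (X ^ 2 + C (ρ ^ 2) : ℝ[X]).natDegree ≤ 2 :=
            (natDegree_add_le _ _).trans (by simp)
          have h3 := Q.natDegree_derivative_le
          omega
      · refine natDegree_mul_le.trans ?_
        have h4 : (C (2 * (t + (j : ℝ))) * X : ℝ[X]).natDegree ≤ 1 := by
          simpa using natDegree_C_mul_le (2 * (t + (j : ℝ))) (X : ℝ[X])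
        omega
    · rw [iteratedDeriv_succ, hQ]
      funext x
      rw [(hasDerivAt_poly_rpow hρ Q (t + (j : ℝ)) x).deriv,
        show -(t + (j : ℝ) + 1) = -(t + ((j : ℕ) + 1 : ℕ)) by push_cast; ring]

lemma eval_bound (P : ℝ[X]) (j : ℕ) (hd : P.natDegree ≤ j) :
    ∃ Cp : ℝ, 0 ≤ Cp ∧ ∀ x : ℝ, |P.eval x| ≤ Cp * (1 + |x|) ^ j := by
  refine ⟨∑ i ∈ Finset.range (P.natDegree + 1), |P.coeff i|,
    Finset.sum_nonneg fun _ _ => abs_nonneg _, fun x => ?_⟩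
  have hb : (1 : ℝ) ≤ 1 + |x| := le_add_of_nonneg_right (abs_nonneg x)
  rw [eval_eq_sum_range, Finset.sum_mul]
  refine (Finset.abs_sum_le_sum_abs _ _).trans (Finset.sum_le_sum fun i hi => ?_)
  rw [abs_mul, abs_pow]
  refine mul_le_mul_of_nonneg_left ?_ (abs_nonneg _)
  calc |x| ^ i ≤ (1 + |x|) ^ i := pow_le_pow_left₀ (abs_nonneg x) (by linarith) i
    _ ≤ (1 + |x|) ^ j := pow_le_pow_right₀ hb
        (by have := Finset.mem_range.mp hi; omega)

lemma u_lower {ρ : ℝ} (hρ : 0 < ρ) (x : ℝ) :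
    min 1 (ρ ^ 2) / 2 * (1 + |x|) ^ 2 ≤ x ^ 2 + ρ ^ 2 := by
  have h1 : (1 + |x|) ^ 2 ≤ 2 + 2 * x ^ 2 := by
    nlinarith [sq_nonneg (1 - |x|), sq_abs x]
  have hm : min 1 (ρ ^ 2) ≤ 1 := min_le_left _ _
  have hm2 : min 1 (ρ ^ 2) ≤ ρ ^ 2 := min_le_right _ _
  have hm0 : 0 < min 1 (ρ ^ 2) := lt_min one_pos (pow_pos hρ 2)
  nlinarith [sq_nonneg x, sq_nonneg (1 + |x|)]

lemma u_upper {ρ : ℝ} (hρ : 0 < ρ) (x : ℝ) :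
    x ^ 2 + ρ ^ 2 ≤ (1 + ρ ^ 2) * (1 + |x|) ^ 2 := by
  nlinarith [abs_nonneg x, sq_abs x, sq_nonneg ρ, sq_nonneg (1 + |x|)]

lemma sq_rpow (x t : ℝ) (hx : 0 ≤ x) : (x ^ 2) ^ (-t) = x ^ (-(2 * t)) := by
  rw [← Real.rpow_natCast x 2, ← Real.rpow_mul hx]
  norm_num

lemma upow_le {ρ : ℝ} (hρ : 0 < ρ) (t : ℝ) (ht : 0 < t) (x : ℝ) :
    (x ^ 2 + ρ ^ 2) ^ (-t)
      ≤ (min 1 (ρ ^ 2) / 2) ^ (-t) * (1 + |x|) ^ (-(2 * t)) := by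
  have hb : (0 : ℝ) ≤ 1 + |x| := by positivity
  have hm0 : (0 : ℝ) < min 1 (ρ ^ 2) / 2 := by
    have := lt_min one_pos (pow_pos hρ 2); linarith
  calc (x ^ 2 + ρ ^ 2) ^ (-t)
      ≤ (min 1 (ρ ^ 2) / 2 * (1 + |x|) ^ 2) ^ (-t) :=
        Real.rpow_le_rpow_of_nonpos (by positivity) (u_lower hρ x) (by linarith)
    _ = (min 1 (ρ ^ 2) / 2) ^ (-t) * ((1 + |x|) ^ 2) ^ (-t) :=
        Real.mul_rpow hm0.le (by positivity)
    _ = (min 1 (ρ ^ 2) / 2) ^ (-t) * (1 + |x|) ^ (-(2 * t)) := by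
        rw [sq_rpow _ _ hb]

lemma upow_ge {ρ : ℝ} (hρ : 0 < ρ) (t : ℝ) (_ht : 0 < t) (x : ℝ) :
    (1 + ρ ^ 2) ^ (-t) * (1 + |x|) ^ (-(2 * t)) ≤ (x ^ 2 + ρ ^ 2) ^ (-t) := by
  have hb : (0 : ℝ) ≤ 1 + |x| := by positivity
  calc (1 + ρ ^ 2) ^ (-t) * (1 + |x|) ^ (-(2 * t))
      = ((1 + ρ ^ 2) * (1 + |x|) ^ 2) ^ (-t) := by
        rw [Real.mul_rpow (by positivity) (by positivity), sq_rpow _ _ hb]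
    _ ≤ (x ^ 2 + ρ ^ 2) ^ (-t) :=
        Real.rpow_le_rpow_of_nonpos (upos hρ x) (u_upper hρ x) (by linarith)

end Stmt1Aux

open Stmt1Aux Polynomial in
theorem stmt1 (α ρ : ℝ) (hα1 : 1 < α) (hα2 : α < 2) (hρ : 0 < ρ) :
    (∀ R lam : ℝ, iteratedDeriv 2 (psi α ρ R) lam
      = α * (lam ^ 2 + ρ ^ 2) ^ (-(2 - α / 2)) * ((α - 1) * lam ^ 2 + ρ ^ 2)) ∧
    (∀ R lam : ℝ, 0 < iteratedDeriv 2 (psi α ρ R) lam) ∧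
    (∃ c C : ℝ, 0 < c ∧ 0 < C ∧ ∀ R lam : ℝ,
      c * (1 + |lam|) ^ (-(2 - α)) ≤ iteratedDeriv 2 (psi α ρ R) lam ∧
      iteratedDeriv 2 (psi α ρ R) lam ≤ C * (1 + |lam|) ^ (-(2 - α))) ∧
    (∀ j : ℕ, ∃ Cj : ℝ, 0 ≤ Cj ∧ ∀ R lam : ℝ,
      |iteratedDeriv j (iteratedDeriv 2 (psi α ρ R)) lam|
        ≤ Cj * (1 + |lam|) ^ (-(2 - α) - (j : ℝ))) := by
  have hα0 : 0 < α := by linarith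
  have hα1' : 0 < α - 1 := by linarith
  refine ⟨fun R lam => second_deriv hρ R lam, ?_, ?_, ?_⟩
  · intro R lam
    rw [second_deriv hρ R lam]
    have hu := upos hρ lam
    have hX := Real.rpow_pos_of_pos hu (-(2 - α / 2))
    have hY : 0 < (α - 1) * lam ^ 2 + ρ ^ 2 := by nlinarith [sq_nonneg lam, pow_pos hρ 2]
    exact mul_pos (mul_pos hα0 hX) hY
  · -- two-sided bound
    have ht : (0 : ℝ) < 1 - α / 2 := by linarith
    refine ⟨α * (α - 1) * (1 + ρ ^ 2) ^ (-(1 - α / 2)),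
      α * (min 1 (ρ ^ 2) / 2) ^ (-(1 - α / 2)), ?_, ?_, ?_⟩
    · have := Real.rpow_pos_of_pos (show (0:ℝ) < 1 + ρ ^ 2 by positivity) (-(1 - α / 2))
      positivity
    · have hm0 : (0 : ℝ) < min 1 (ρ ^ 2) / 2 := by
        have := lt_min one_pos (pow_pos hρ 2); linarith
      have := Real.rpow_pos_of_pos hm0 (-(1 - α / 2))
      positivity
    · intro R lam
      have hu := upos hρ lam
      rw [second_deriv hρ R lam]
      have hmerge : (lam ^ 2 + ρ ^ 2) ^ (-(2 - α / 2)) * (lam ^ 2 + ρ ^ 2)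
          = (lam ^ 2 + ρ ^ 2) ^ (-(1 - α / 2)) := by
        rw [show -(1 - α / 2) = -(2 - α / 2) + 1 by ring, Real.rpow_add hu, Real.rpow_one]
      have hup := Real.rpow_pos_of_pos hu (-(2 - α / 2))
      constructor
      · have h1 : α * (α - 1) * (lam ^ 2 + ρ ^ 2) ^ (-(1 - α / 2))
            ≤ α * (lam ^ 2 + ρ ^ 2) ^ (-(2 - α / 2)) * ((α - 1) * lam ^ 2 + ρ ^ 2) := by
          rw [← hmerge]
          have hle : (α - 1) * (lam ^ 2 + ρ ^ 2) ≤ (α - 1) * lam ^ 2 + ρ ^ 2 := by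
            nlinarith [pow_pos hρ 2]
          calc α * (α - 1) * ((lam ^ 2 + ρ ^ 2) ^ (-(2 - α / 2)) * (lam ^ 2 + ρ ^ 2))
              = α * (lam ^ 2 + ρ ^ 2) ^ (-(2 - α / 2)) * ((α - 1) * (lam ^ 2 + ρ ^ 2)) := by
                ring
            _ ≤ α * (lam ^ 2 + ρ ^ 2) ^ (-(2 - α / 2)) * ((α - 1) * lam ^ 2 + ρ ^ 2) :=
                mul_le_mul_of_nonneg_left hle (mul_nonneg hα0.le hup.le)
        refine le_trans ?_ h1
        have h2 := upow_ge hρ (1 - α / 2) ht lam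
        rw [show -(2 * (1 - α / 2)) = -(2 - α) by ring] at h2
        calc α * (α - 1) * (1 + ρ ^ 2) ^ (-(1 - α / 2)) * (1 + |lam|) ^ (-(2 - α))
            = α * (α - 1) * ((1 + ρ ^ 2) ^ (-(1 - α / 2)) * (1 + |lam|) ^ (-(2 - α))) := by
              ring
          _ ≤ α * (α - 1) * (lam ^ 2 + ρ ^ 2) ^ (-(1 - α / 2)) :=
              mul_le_mul_of_nonneg_left h2 (mul_nonneg hα0.le hα1'.le)
      · have h1 : α * (lam ^ 2 + ρ ^ 2) ^ (-(2 - α / 2)) * ((α - 1) * lam ^ 2 + ρ ^ 2)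
            ≤ α * (lam ^ 2 + ρ ^ 2) ^ (-(1 - α / 2)) := by
          rw [← hmerge]
          have hle : (α - 1) * lam ^ 2 + ρ ^ 2 ≤ lam ^ 2 + ρ ^ 2 := by
            nlinarith [sq_nonneg lam]
          calc α * (lam ^ 2 + ρ ^ 2) ^ (-(2 - α / 2)) * ((α - 1) * lam ^ 2 + ρ ^ 2)
              ≤ α * (lam ^ 2 + ρ ^ 2) ^ (-(2 - α / 2)) * (lam ^ 2 + ρ ^ 2) :=
                mul_le_mul_of_nonneg_left hle (mul_nonneg hα0.le hup.le)
            _ = α * ((lam ^ 2 + ρ ^ 2) ^ (-(2 - α / 2)) * (lam ^ 2 + ρ ^ 2)) := by ring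
        refine h1.trans ?_
        have h2 := upow_le hρ (1 - α / 2) ht lam
        rw [show -(2 * (1 - α / 2)) = -(2 - α) by ring] at h2
        calc α * (lam ^ 2 + ρ ^ 2) ^ (-(1 - α / 2))
            ≤ α * ((min 1 (ρ ^ 2) / 2) ^ (-(1 - α / 2)) * (1 + |lam|) ^ (-(2 - α))) :=
              mul_le_mul_of_nonneg_left h2 hα0.le
          _ = α * (min 1 (ρ ^ 2) / 2) ^ (-(1 - α / 2)) * (1 + |lam|) ^ (-(2 - α)) := by
              ring
  · -- symbol estimates
    intro j
    set P0 : ℝ[X] := C (α * (α - 1)) * X ^ 2 + C (α * ρ ^ 2) with hP0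
    have hP0deg : P0.natDegree ≤ 2 := by
      refine (natDegree_add_le _ _).trans (max_le ?_ ?_)
      · exact (natDegree_C_mul_le _ _).trans (le_of_eq (natDegree_X_pow 2))
      · exact le_trans (le_of_eq (natDegree_C _)) (by norm_num)
    obtain ⟨Q, hQdeg, hQ⟩ := iter_poly hρ P0 (2 - α / 2) j
    obtain ⟨Cp, hCp, hCpb⟩ := eval_bound Q (2 + j) (hQdeg.trans (by omega))
    have htj : (0 : ℝ) < 2 - α / 2 + (j : ℝ) := by
      have : (0 : ℝ) ≤ (j : ℝ) := Nat.cast_nonneg j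
      linarith
    set K : ℝ := (min 1 (ρ ^ 2) / 2) ^ (-(2 - α / 2 + (j : ℝ))) with hK
    have hK0 : 0 < K := by
      refine Real.rpow_pos_of_pos ?_ _
      have := lt_min one_pos (pow_pos hρ 2); linarith
    refine ⟨Cp * K, by positivity, fun R lam => ?_⟩
    have hu := upos hρ lam
    have hb1 : (1 : ℝ) ≤ 1 + |lam| := le_add_of_nonneg_right (abs_nonneg lam)
    have hb0 : (0 : ℝ) < 1 + |lam| := by linarith
    have hf : iteratedDeriv 2 (psi α ρ R)
        = fun x => P0.eval x * (x ^ 2 + ρ ^ 2) ^ (-(2 - α / 2)) := by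
      funext x
      rw [second_deriv hρ R x]
      simp only [hP0, eval_add, eval_mul, eval_pow, eval_C, eval_X]
      ring
    rw [hf, hQ]
    have hupos := Real.rpow_pos_of_pos hu (-(2 - α / 2 + (j : ℝ)))
    rw [abs_mul, abs_of_pos hupos]
    have h1 : |Q.eval lam| ≤ Cp * (1 + |lam|) ^ (2 + j) := hCpb lam
    have h2 : (lam ^ 2 + ρ ^ 2) ^ (-(2 - α / 2 + (j : ℝ)))
        ≤ K * (1 + |lam|) ^ (-(2 * (2 - α / 2 + (j : ℝ)))) := upow_le hρ _ htj lam
    calc |Q.eval lam| * (lam ^ 2 + ρ ^ 2) ^ (-(2 - α / 2 + (j : ℝ)))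
        ≤ (Cp * (1 + |lam|) ^ (2 + j)) * (K * (1 + |lam|) ^ (-(2 * (2 - α / 2 + (j : ℝ))))) := by
          refine mul_le_mul h1 h2 hupos.le (by positivity)
      _ = Cp * K * ((1 + |lam|) ^ (((2 + j : ℕ)) : ℝ)
            * (1 + |lam|) ^ (-(2 * (2 - α / 2 + (j : ℝ))))) := by
          rw [Real.rpow_natCast (1 + |lam|) (2 + j)]; ring
      _ = Cp * K * (1 + |lam|) ^ (-(2 - α) - (j : ℝ)) := by
          rw [← Real.rpow_add hb0,
            show ((2 + j : ℕ) : ℝ) + -(2 * (2 - α / 2 + (j : ℝ))) = -(2 - α) - (j : ℝ) by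
              push_cast; ring]
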